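/- If a dimaze (D, B_0) defines a matroid M_L(D, B_0) and has the property that maximal linkable sets coincide with sets linkable onto B_0, then the dual matroid of M_L(D, B_0) is the path-transversal system M_{PT}((D, B_0)^⋆) of the converted bimaze (in particular the latter is a matroid). -/

import Mathlib

open Set


/-- A finite directed path/walk or a ray, encoded by a vertex function and a length:
the number of edges, `⊤` for a ray. Only indices `≤ len` are meaningful. -/
structure DiWalk (V : Type*) where
  vtx : ℕ → V
  len : ℕ∞

namespace DiWalk

variable {V : Type*} (w : DiWalk V)

/-- The vertices of the walk. -/
def support : Set V := {v | ∃ i : ℕ, (i : ℕ∞) ≤ w.len ∧ w.vtx i = v}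

/-- The directed edges of the walk. -/
def edges : Set (V × V) := {e | ∃ i : ℕ, (i : ℕ∞) + 1 ≤ w.len ∧ e = (w.vtx i, w.vtx (i + 1))}

/-- The initial vertex. -/
def Ini : V := w.vtx 0

/-- The terminal vertex (meaningful for finite walks). -/
def Ter : V := w.vtx w.len.toNat

/-- `w` is a ray, i.e. one-way infinite. -/
def IsRay : Prop := w.len = ⊤

/-- `w` is a (finite) directed path or a directed ray in the digraph `D`: consecutive
vertices are joined by edges of `D` and no vertex is repeated. -/
def IsPathIn (D : V → V → Prop) : Prop :=
  (∀ i : ℕ, (i : ℕ∞) + 1 ≤ w.len → D (w.vtx i) (w.vtx (i + 1))) ∧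
  (∀ i j : ℕ, (i : ℕ∞) ≤ w.len → (j : ℕ∞) ≤ w.len → w.vtx i = w.vtx j → i = j)

end DiWalk

variable {V : Type*}

/-- The vertex set of a family of walks. -/
def VSet (Q : Set (DiWalk V)) : Set V := ⋃ q ∈ Q, q.support

/-- The edge set of a family of walks. -/
def ESet (Q : Set (DiWalk V)) : Set (V × V) := ⋃ q ∈ Q, q.edges

/-- The set of initial vertices of a family of walks. -/
def IniSet (Q : Set (DiWalk V)) : Set V := DiWalk.Ini '' Q

/-- The set of terminal vertices of the finite members of a family of walks. -/
def TerSet (Q : Set (DiWalk V)) : Set V := {v | ∃ q ∈ Q, ¬ q.IsRay ∧ q.Ter = v}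

/-- The members of `Q` are pairwise vertex-disjoint. -/
def PairwiseDisjointWalks (Q : Set (DiWalk V)) : Prop :=
  ∀ p ∈ Q, ∀ q ∈ Q, p ≠ q → Disjoint p.support q.support

/-- `Q` is a set of pairwise disjoint directed paths or rays in `D`. -/
def IsPathSystem (D : V → V → Prop) (Q : Set (DiWalk V)) : Prop :=
  (∀ q ∈ Q, q.IsPathIn D) ∧ PairwiseDisjointWalks Q

/-- A linkage in the dimaze `(D, B0)`: a set of pairwise disjoint finite directed paths
ending in `B0`. -/
def IsLinkage (D : V → V → Prop) (B0 : Set V) (Q : Set (DiWalk V)) : Prop :=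
  IsPathSystem D Q ∧ ∀ q ∈ Q, ¬ q.IsRay ∧ q.Ter ∈ B0

/-- `I` is linkable to `B0` in `(D, B0)`. -/
def Linkable (D : V → V → Prop) (B0 : Set V) (I : Set V) : Prop :=
  ∃ Q, IsLinkage D B0 Q ∧ IniSet Q = I

/-- `I` is linkable onto `B0`: some linkage from `I` has terminal vertex set exactly `B0`. -/
def LinkableOnto (D : V → V → Prop) (B0 : Set V) (I : Set V) : Prop :=
  ∃ Q, IsLinkage D B0 Q ∧ IniSet Q = I ∧ TerSet Q = B0

/-- `B0` is a set of sinks of `D`. -/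
def IsDimaze (D : V → V → Prop) (B0 : Set V) : Prop := ∀ b ∈ B0, ∀ v, ¬ D b v

/-- `v` is the centre of a linking fan: infinitely many non-trivial directed paths to `B0`
from `v`, pairwise meeting only in `v`. -/
def IsFanCentre (D : V → V → Prop) (B0 : Set V) (v : V) : Prop :=
  ∃ P : Set (DiWalk V), P.Infinite ∧
    (∀ p ∈ P, p.IsPathIn D ∧ ¬ p.IsRay ∧ 1 ≤ p.len ∧ p.Ini = v ∧ p.Ter ∈ B0) ∧
    (∀ p ∈ P, ∀ q ∈ P, p ≠ q → p.support ∩ q.support ⊆ {v})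

/-- The ray `R` is the spine of an outgoing comb with teeth ending in `B0`: there are
infinitely many pairwise disjoint non-trivial paths from distinct vertices of `R` to `B0`,
each meeting `R` exactly in its initial vertex. -/
def IsSpine (D : V → V → Prop) (B0 : Set V) (R : DiWalk V) : Prop :=
  R.IsPathIn D ∧ R.IsRay ∧
  ∃ P : Set (DiWalk V), P.Infinite ∧
    (∀ p ∈ P, p.IsPathIn D ∧ ¬ p.IsRay ∧ 1 ≤ p.len ∧ p.Ini ∈ R.support ∧ p.Ter ∈ B0 ∧
      p.support ∩ R.support = {p.Ini}) ∧
    PairwiseDisjointWalks P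

/-- `(D, B0)` contains no subdivision of an outgoing comb. -/
def COFree (D : V → V → Prop) (B0 : Set V) : Prop := ¬ ∃ R, IsSpine D B0 R

/-- `(D, B0)` contains no subdivision of a linking fan. -/
def FanFree (D : V → V → Prop) (B0 : Set V) : Prop := ¬ ∃ v, IsFanCentre D B0 v

/-- A topological path in `(D, B0)`. -/
def IsTopPath (D : V → V → Prop) (B0 : Set V) (w : DiWalk V) : Prop :=
  w.IsPathIn D ∧
    ((¬ w.IsRay ∧ w.Ter ∈ B0) ∨ (¬ w.IsRay ∧ IsFanCentre D B0 w.Ter) ∨ IsSpine D B0 w)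

/-- `I` is topologically linkable in `(D, B0)`. -/
def TopLinkable (D : V → V → Prop) (B0 : Set V) (I : Set V) : Prop :=
  ∃ Q : Set (DiWalk V), (∀ q ∈ Q, IsTopPath D B0 q) ∧ PairwiseDisjointWalks Q ∧ IniSet Q = I
section Bipartite

variable {V W : Type*}

/-- `m` is a matching in the bipartite graph with edge set `E ⊆ V × W`. -/
def IsBipMatching (E m : Set (V × W)) : Prop :=
  m ⊆ E ∧ ∀ p ∈ m, ∀ q ∈ m, (p.1 = q.1 ∨ p.2 = q.2) → p = q

/-- `I ⊆ V` is matchable in the bipartite graph with edge set `E`. -/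
def Matchable (E : Set (V × W)) (I : Set V) : Prop :=
  ∃ m, IsBipMatching E m ∧ Prod.fst '' m = I

/-- One step along an edge of `F` in the bipartite graph, on vertex type `V ⊕ W`. -/
def bipStep (F : Set (V × W)) : (V ⊕ W) → (V ⊕ W) → Prop := fun a b =>
  match a, b with
  | Sum.inl v, Sum.inr w => (v, w) ∈ F
  | Sum.inr w, Sum.inl v => (v, w) ∈ F
  | _, _ => False

/-- Every connected component of the bipartite graph with edge set `F` is finite. -/
def FiniteComponents (F : Set (V × W)) : Prop :=
  ∀ x : V ⊕ W, {y | Relation.ReflTransGen (bipStep F) x y}.Finite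

/-- `m` is an `m0`-matching: a matching such that every component of `m0 ∪ m` is finite. -/
def IsM0Matching (E m0 m : Set (V × W)) : Prop :=
  IsBipMatching E m ∧ FiniteComponents (m0 ∪ m)

/-- `I` is `m0`-matchable. -/
def M0Matchable (E m0 : Set (V × W)) (I : Set V) : Prop :=
  ∃ m, IsM0Matching E m0 m ∧ Prod.fst '' m = I

/-- `I` is `m0`-matchable onto `W'`. -/
def M0MatchableOnto (E m0 : Set (V × W)) (I : Set V) (W' : Set W) : Prop :=
  ∃ m, IsM0Matching E m0 m ∧ Prod.fst '' m = I ∧ Prod.snd '' m = W'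

end Bipartite

section Star

variable {V : Type*}

/-- The edge set of the converted bimaze of the dimaze `(D, B0)`: the right class is
`{v ∣ v ∉ B0}` (representing `(V \ B0)⋆`) and the edges are the identity matching
together with `v u⋆` for every edge `(u, v)` of `D`. -/
def starEdges (D : V → V → Prop) (B0 : Set V) : Set (V × V) :=
  {p | (p.1 = p.2 ∧ p.2 ∉ B0) ∨ (D p.2 p.1 ∧ p.2 ∉ B0)}

/-- The identity matching of the converted bimaze. -/
def starM0 (B0 : Set V) : Set (V × V) := {p | p.1 = p.2 ∧ p.1 ∉ B0}

end Star

/-- The property `(†)` of a dimaze: the maximal linkable sets are exactly the sets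
linkable onto `B0`. -/
def DaggerProp {V : Type*} (D : V → V → Prop) (B0 : Set V) : Prop :=
  ∀ I, (Linkable D B0 I ∧ ∀ I', Linkable D B0 I' → I ⊆ I' → I = I') ↔ LinkableOnto D B0 I

/-- The property `(‡)` of a bimaze: the maximal `m0`-matchable sets are exactly the sets
`m0`-matchable onto the right class `Wcl`. -/
def DDaggerProp {V W : Type*} (E m0 : Set (V × W)) (Wcl : Set W) : Prop :=
  ∀ I, (M0Matchable E m0 I ∧ ∀ I', M0Matchable E m0 I' → I ⊆ I' → I = I') ↔
    M0MatchableOnto E m0 I Wcl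

section ProofHelpers

variable {V : Type*} {D : V → V → Prop} {B0 : Set V}

lemma bipStep_mono {W : Type*} {F F' : Set (V × W)} (h : F ⊆ F') :
    ∀ a b, bipStep F a b → bipStep F' a b := by
  rintro (v | w) (v' | w') hab
  · exact hab.elim
  · exact h hab
  · exact h hab
  · exact hab.elim

lemma M0Matchable.subset {W : Type*} {E m0 : Set (V × W)} {I J : Set V}
    (hJ : M0Matchable E m0 J) (hIJ : I ⊆ J) : M0Matchable E m0 I := by
  obtain ⟨m, ⟨⟨hmE, hmm⟩, hfin⟩, hfst⟩ := hJ
  refine ⟨{p ∈ m | p.1 ∈ I}, ⟨⟨fun p hp => hmE hp.1,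
      fun p hp q hq h => hmm p hp.1 q hq.1 h⟩, ?_⟩, ?_⟩
  · intro x
    refine (hfin x).subset fun y hy => ?_
    exact Relation.ReflTransGen.mono
      (bipStep_mono (Set.union_subset_union_right m0 (Set.sep_subset _ _))) _ _ hy
  · apply Set.Subset.antisymm
    · rintro _ ⟨p, hp, rfl⟩
      exact hp.2
    · intro x hx
      obtain ⟨p, hp, rfl⟩ : ∃ p ∈ m, p.1 = x := by
        have := hIJ hx; rw [← hfst] at this; exact this
      exact ⟨p, ⟨hp, hx⟩, rfl⟩

namespace DiWalk

lemma vtx_mem_support (w : DiWalk V) {i : ℕ} (hi : (i : ℕ∞) ≤ w.len) :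
    w.vtx i ∈ w.support := ⟨i, hi, rfl⟩

lemma support_finite {w : DiWalk V} (h : ¬ w.IsRay) : w.support.Finite := by
  obtain ⟨n, hn⟩ : ∃ n : ℕ, w.len = (n : ℕ∞) := by
    cases h' : w.len with
    | top => exact absurd h' h
    | coe n => exact ⟨n, rfl⟩
  refine ((Set.finite_Iic n).image w.vtx).subset ?_
  rintro _ ⟨i, hi, rfl⟩
  rw [hn, Nat.cast_le] at hi
  exact ⟨i, hi, rfl⟩

lemma edge_spec {w : DiWalk V} {u v : V} (h : (u, v) ∈ w.edges) :
    ∃ i : ℕ, (i : ℕ∞) + 1 ≤ w.len ∧ u = w.vtx i ∧ v = w.vtx (i + 1) := by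
  obtain ⟨i, hi, he⟩ := h
  exact ⟨i, hi, congrArg Prod.fst he, congrArg Prod.snd he⟩

lemma cast_succ_le {w : DiWalk V} {i : ℕ} (h : (i : ℕ∞) + 1 ≤ w.len) :
    ((i + 1 : ℕ) : ℕ∞) ≤ w.len := by push_cast; exact h

lemma cast_le_of_succ {w : DiWalk V} {i : ℕ} (h : (i : ℕ∞) + 1 ≤ w.len) :
    (i : ℕ∞) ≤ w.len := le_trans le_self_add h

lemma ini_mem_support (w : DiWalk V) : w.Ini ∈ w.support := ⟨0, by simp, rfl⟩

lemma ter_mem_support {w : DiWalk V} (h : ¬ w.IsRay) : w.Ter ∈ w.support := by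
  obtain ⟨n, hn⟩ : ∃ n : ℕ, w.len = (n : ℕ∞) := by
    cases h' : w.len with
    | top => exact absurd h' h
    | coe n => exact ⟨n, rfl⟩
  exact ⟨w.len.toNat, by rw [hn]; simp, rfl⟩

end DiWalk

end ProofHelpers
section Forward

variable {V : Type*} {D : V → V → Prop} {B0 : Set V}

lemma linkableOnto_matchable (hDim : IsDimaze D B0) {B : Set V}
    (hB : LinkableOnto D B0 B) :
    M0Matchable (starEdges D B0) (starM0 B0) Bᶜ := by
  classical
  obtain ⟨Q, ⟨⟨hpath, hdisj⟩, hend⟩, hIni, hTer⟩ := hB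
  -- membership in ESet
  have memESet : ∀ {u v : V}, (u, v) ∈ ESet Q ↔ ∃ q ∈ Q, (u, v) ∈ q.edges := by
    intro u v; simp [ESet]
  -- vertices of edges are in support
  have edge_fst_supp : ∀ {q : DiWalk V} {u v : V}, (u, v) ∈ q.edges → u ∈ q.support := by
    intro q u v h
    obtain ⟨i, hi, hu, -⟩ := DiWalk.edge_spec h
    exact hu ▸ q.vtx_mem_support (DiWalk.cast_le_of_succ hi)
  have edge_snd_supp : ∀ {q : DiWalk V} {u v : V}, (u, v) ∈ q.edges → v ∈ q.support := by
    intro q u v h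
    obtain ⟨i, hi, -, hv⟩ := DiWalk.edge_spec h
    exact hv ▸ q.vtx_mem_support (DiWalk.cast_succ_le hi)
  -- two paths sharing a vertex are equal
  have samePath : ∀ {q q' : DiWalk V}, q ∈ Q → q' ∈ Q → ∀ {x : V},
      x ∈ q.support → x ∈ q'.support → q = q' := by
    intro q q' hq hq' x hx hx'
    by_contra hne
    exact Set.disjoint_left.mp (hdisj q hq q' hq' hne) hx hx'
  -- edges of paths are D-edges with tail not in B0
  have edgeD : ∀ {q : DiWalk V}, q ∈ Q → ∀ {u v : V}, (u, v) ∈ q.edges →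
      D u v ∧ u ∉ B0 := by
    intro q hq u v h
    obtain ⟨i, hi, hu, hv⟩ := DiWalk.edge_spec h
    have hD := (hpath q hq).1 i hi
    rw [← hu, ← hv] at hD
    exact ⟨hD, fun hB0 => hDim u hB0 v hD⟩
  -- B0 ⊆ VSet Q
  have hB0V : B0 ⊆ VSet Q := by
    intro b hb
    rw [← hTer] at hb
    obtain ⟨q, hq, hray, hter⟩ := hb
    exact Set.mem_biUnion hq (hter ▸ DiWalk.ter_mem_support hray)
  -- IniSet ⊆ VSet
  have hIniV : IniSet Q ⊆ VSet Q := by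
    rintro _ ⟨q, hq, rfl⟩
    exact Set.mem_biUnion hq q.ini_mem_support
  -- the matching
  set m : Set (V × V) :=
    {p | (p.2, p.1) ∈ ESet Q} ∪ {p | p.1 = p.2 ∧ p.1 ∉ VSet Q} with hm
  -- uniqueness of predecessors / successors
  have epred : ∀ {u u' v : V}, (u, v) ∈ ESet Q → (u', v) ∈ ESet Q → u = u' := by
    intro u u' v h h'
    obtain ⟨q, hq, he⟩ := memESet.mp h
    obtain ⟨q', hq', he'⟩ := memESet.mp h'
    obtain rfl := samePath hq hq' (edge_snd_supp he) (edge_snd_supp he')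
    obtain ⟨i, hi, hu, hv⟩ := DiWalk.edge_spec he
    obtain ⟨j, hj, hu', hv'⟩ := DiWalk.edge_spec he'
    have : i + 1 = j + 1 := (hpath q hq).2 _ _ (DiWalk.cast_succ_le hi)
      (DiWalk.cast_succ_le hj) (hv ▸ hv' ▸ rfl)
    rw [hu, hu', Nat.succ_injective this]
  have esucc : ∀ {u v v' : V}, (u, v) ∈ ESet Q → (u, v') ∈ ESet Q → v = v' := by
    intro u v v' h h'
    obtain ⟨q, hq, he⟩ := memESet.mp h
    obtain ⟨q', hq', he'⟩ := memESet.mp h'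
    obtain rfl := samePath hq hq' (edge_fst_supp he) (edge_fst_supp he')
    obtain ⟨i, hi, hu, hv⟩ := DiWalk.edge_spec he
    obtain ⟨j, hj, hu', hv'⟩ := DiWalk.edge_spec he'
    have : i = j := (hpath q hq).2 _ _ (DiWalk.cast_le_of_succ hi)
      (DiWalk.cast_le_of_succ hj) (hu ▸ hu' ▸ rfl)
    rw [hv, hv', this]
  -- path edges' heads are in VSet
  have mem_snd_VSet : ∀ {u v : V}, (u, v) ∈ ESet Q → v ∈ VSet Q := by
    intro u v h
    obtain ⟨q, hq, he⟩ := memESet.mp h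
    exact Set.mem_biUnion hq (edge_snd_supp he)
  have mem_fst_VSet : ∀ {u v : V}, (u, v) ∈ ESet Q → u ∈ VSet Q := by
    intro u v h
    obtain ⟨q, hq, he⟩ := memESet.mp h
    exact Set.mem_biUnion hq (edge_fst_supp he)
  refine ⟨m, ⟨⟨?_, ?_⟩, ?_⟩, ?_⟩
  · -- m ⊆ starEdges
    rintro ⟨x, y⟩ (h | ⟨heq, hnV⟩)
    · have h' : (y, x) ∈ ESet Q := h
      obtain ⟨q, hq, he⟩ := memESet.mp h'
      obtain ⟨hD, hnb⟩ := edgeD hq he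
      exact Or.inr ⟨hD, hnb⟩
    · simp only [Set.mem_setOf_eq] at heq hnV
      exact Or.inl ⟨heq, fun hb => hnV (hB0V (heq ▸ hb))⟩
  · -- matching property
    rintro ⟨x, y⟩ hp ⟨x', y'⟩ hq hshare
    simp only [Set.mem_setOf_eq] at hshare
    rcases hp with hp | ⟨hpe, hpV⟩ <;> rcases hq with hq | ⟨hqe, hqV⟩
    · have hp' : (y, x) ∈ ESet Q := hp
      have hq' : (y', x') ∈ ESet Q := hq
      rcases hshare with h | h
      · subst h; obtain rfl := epred hp' hq'; rfl
      · subst h; obtain rfl := esucc hp' hq'; rfl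
    · exfalso
      have hp' : (y, x) ∈ ESet Q := hp
      simp only [Set.mem_setOf_eq] at hqe hqV
      rcases hshare with h | h
      · exact hqV (h ▸ mem_snd_VSet hp')
      · exact hqV (hqe ▸ h ▸ mem_fst_VSet hp')
    · exfalso
      have hq' : (y', x') ∈ ESet Q := hq
      simp only [Set.mem_setOf_eq] at hpe hpV
      rcases hshare with h | h
      · exact hpV (h ▸ mem_snd_VSet hq')
      · exact hpV (hpe ▸ h ▸ mem_fst_VSet hq')
    · simp only [Set.mem_setOf_eq] at hpe hqe
      subst hpe; subst hqe
      rcases hshare with h | h <;> rw [h]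
  · -- finite components
    intro x
    by_cases hx : Sum.elim id id x ∈ VSet Q
    · obtain ⟨q, hq, hsupp⟩ : ∃ q ∈ Q, Sum.elim id id x ∈ q.support := by
        simpa [VSet] using hx
      set T : Set (V ⊕ V) := Sum.inl '' q.support ∪ Sum.inr '' q.support with hT
      have hTfin : T.Finite := by
        have := DiWalk.support_finite (hend q hq).1
        exact (this.image _).union (this.image _)
      refine hTfin.subset ?_
      intro y hy
      have hclosed : ∀ a ∈ T, ∀ b, bipStep (starM0 B0 ∪ m) a b → b ∈ T := by
        rintro a ha b hab
        rcases a with av | aw <;> rcases b with bv | bw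
        · exact hab.elim
        · -- inl av → inr bw : (av, bw) ∈ F
          have haw : av ∈ q.support := by
            rcases ha with ⟨z, hz, hze⟩ | ⟨z, hz, hze⟩
            · injection hze with h; exact h ▸ hz
            · injection hze
          have hab' : (av, bw) ∈ starM0 B0 ∪ m := hab
          rcases hab' with ⟨heq, -⟩ | (he | ⟨heq, -⟩)
          · exact Or.inr ⟨av, haw, congrArg Sum.inr heq⟩
          · -- (bw, av) ∈ ESet Q
            have he' : (bw, av) ∈ ESet Q := he
            obtain ⟨q', hq', he''⟩ := memESet.mp he'
            obtain rfl := samePath hq hq' haw (edge_snd_supp he'')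
            exact Or.inr ⟨bw, edge_fst_supp he'', rfl⟩
          · simp only [Set.mem_setOf_eq] at heq
            exact Or.inr ⟨av, haw, by rw [heq]⟩
        · -- inr aw → inl bv : (bv, aw) ∈ F
          have haw : aw ∈ q.support := by
            rcases ha with ⟨z, hz, hze⟩ | ⟨z, hz, hze⟩
            · injection hze
            · injection hze with h; exact h ▸ hz
          have hab' : (bv, aw) ∈ starM0 B0 ∪ m := hab
          rcases hab' with ⟨heq, -⟩ | (he | ⟨heq, -⟩)
          · exact Or.inl ⟨aw, haw, (congrArg Sum.inl heq).symm⟩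
          · -- (aw, bv) ∈ ESet Q
            have he' : (aw, bv) ∈ ESet Q := he
            obtain ⟨q', hq', he''⟩ := memESet.mp he'
            obtain rfl := samePath hq hq' haw (edge_fst_supp he'')
            exact Or.inl ⟨bv, edge_snd_supp he'', rfl⟩
          · simp only [Set.mem_setOf_eq] at heq
            exact Or.inl ⟨aw, haw, by rw [heq]⟩
        · exact hab.elim
      have hxT : x ∈ T := by
        rcases x with xv | xw
        · exact Or.inl ⟨xv, hsupp, rfl⟩
        · exact Or.inr ⟨xw, hsupp, rfl⟩
      clear hx
      induction hy with
      | refl => exact hxT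
      | tail _ hstep ih => exact hclosed _ ih _ hstep
    · set T : Set (V ⊕ V) := {Sum.inl (Sum.elim id id x), Sum.inr (Sum.elim id id x)} with hT
      have hTfin : T.Finite :=
        (Set.finite_singleton (Sum.inr (Sum.elim id id x))).insert (Sum.inl (Sum.elim id id x))
      refine hTfin.subset ?_
      intro y hy
      have hclosed : ∀ a ∈ T, ∀ b, bipStep (starM0 B0 ∪ m) a b → b ∈ T := by
        rintro a ha b hab
        rcases a with av | aw <;> rcases b with bv | bw
        · exact hab.elim
        · have hav : av = Sum.elim id id x := by
            rcases ha with h | h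
            · injection h
            · exact absurd h (by simp)
          have hab' : (av, bw) ∈ starM0 B0 ∪ m := hab
          rcases hab' with ⟨heq, -⟩ | (he | ⟨heq, -⟩)
          · have heq' : av = bw := heq
            exact Or.inr (by rw [← heq', hav]; exact Set.mem_singleton _)
          · rw [hav] at he
            exact absurd (mem_snd_VSet
              (show (bw, Sum.elim id id x) ∈ ESet Q from he)) hx
          · have heq' : av = bw := heq
            exact Or.inr (by rw [← heq', hav]; exact Set.mem_singleton _)
        · have haw : aw = Sum.elim id id x := by
            rcases ha with h | h
            · exact absurd h (by simp)
            · injection h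
          have hab' : (bv, aw) ∈ starM0 B0 ∪ m := hab
          rcases hab' with ⟨heq, -⟩ | (he | ⟨heq, -⟩)
          · have heq' : bv = aw := heq
            exact Or.inl (by rw [heq', haw])
          · rw [haw] at he
            exact absurd (mem_fst_VSet
              (show (Sum.elim id id x, bv) ∈ ESet Q from he)) hx
          · have heq' : bv = aw := heq
            exact Or.inl (by rw [heq', haw])
        · exact hab.elim
      have hxT : x ∈ T := by
        rcases x with xv | xw
        · exact Or.inl rfl
        · exact Or.inr rfl
      induction hy with
      | refl => exact hxT
      | tail _ hstep ih => exact hclosed _ ih _ hstep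
  · -- fst '' m = Bᶜ
    rw [← hIni]
    apply Set.Subset.antisymm
    · rintro _ ⟨⟨x, y⟩, hp, rfl⟩
      rcases hp with hp | ⟨heq, hnV⟩
      · -- x head of a path edge, not initial
        intro hxIni
        obtain ⟨q', hq', hq'i⟩ := hxIni
        obtain ⟨q, hq, he⟩ := memESet.mp hp
        obtain rfl := samePath hq' hq (hq'i ▸ q'.ini_mem_support) (edge_snd_supp he)
        obtain ⟨i, hi, hu, hv⟩ := DiWalk.edge_spec he
        have h0 : (0 : ℕ) = i + 1 := (hpath q' hq).2 0 (i + 1) (by simp)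
          (DiWalk.cast_succ_le hi) (by rw [← hv, ← hq'i]; rfl)
        exact Nat.succ_ne_zero i h0.symm
      · exact fun hxIni => hnV (hIniV hxIni)
    · intro x hx
      by_cases hxV : x ∈ VSet Q
      · obtain ⟨q, hq, i, hi, rfl⟩ : ∃ q ∈ Q, ∃ i : ℕ, (i : ℕ∞) ≤ q.len ∧ q.vtx i = x := by
          simpa [VSet, DiWalk.support] using hxV
        cases i with
        | zero => exact absurd ⟨q, hq, rfl⟩ hx
        | succ j =>
          have hj : (j : ℕ∞) + 1 ≤ q.len := by
            have := hi; push_cast at this ⊢; exact this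
          refine ⟨(q.vtx (j + 1), q.vtx j), Or.inl (memESet.mpr ⟨q, hq, j, hj, rfl⟩), rfl⟩
      · exact ⟨(x, x), Or.inr ⟨rfl, hxV⟩, rfl⟩

end Forward
section Backward

variable {V : Type*} {D : V → V → Prop} {B0 : Set V}

lemma matchable_exists_linkableOnto {I : Set V}
    (hI : M0Matchable (starEdges D B0) (starM0 B0) I) :
    ∃ B, LinkableOnto D B0 B ∧ Disjoint I B := by
  classical
  obtain ⟨m, ⟨⟨hmE, hmm⟩, hfin⟩, hfst⟩ := hI
  set f : V → V := fun x => if h : ∃ u, (x, u) ∈ m then h.choose else x with hf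
  set v : V → ℕ → V := fun b n => f^[n] b with hv
  have hv0 : ∀ b, v b 0 = b := fun b => rfl
  have hvs : ∀ b n, v b (n + 1) = f (v b n) := fun b n =>
    Function.iterate_succ_apply' f n b
  have hstep : ∀ b n, (∃ u, (v b n, u) ∈ m) → (v b n, v b (n + 1)) ∈ m := by
    intro b n h
    rw [hvs, hf]
    simpa only [dif_pos h] using h.choose_spec
  -- Active b n : all steps below n are real m-steps
  set Active : V → ℕ → Prop := fun b n => ∀ k < n, ∃ u, (v b k, u) ∈ m with hA
  have hActive_mono : ∀ b {n k}, k ≤ n → Active b n → Active b k := by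
    intro b n k hkn hact j hj
    exact hact j (lt_of_lt_of_le hj hkn)
  -- second coordinates of m-edges avoid B0
  have hsnd : ∀ {p : V × V}, p ∈ m → p.2 ∉ B0 := by
    intro p hp
    rcases hmE hp with ⟨-, h⟩ | ⟨-, h⟩ <;> exact h
  -- the key injectivity lemma
  have key : ∀ s : ℕ, ∀ i j b b', i + j = s → b ∈ B0 → b' ∈ B0 →
      Active b i → Active b' j → v b i = v b' j → b = b' ∧ i = j := by
    intro s
    induction s using Nat.strong_induction_on with
    | _ s ih =>
      intro i j b b' hsum hb hb' hai haj heq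
      match i, j with
      | 0, 0 => exact ⟨heq, rfl⟩
      | 0, j + 1 =>
        exfalso
        have he := hstep b' j (haj j (Nat.lt_succ_self j))
        have := hsnd he
        rw [← heq, hv0] at this
        exact this hb
      | i + 1, 0 =>
        exfalso
        have he := hstep b i (hai i (Nat.lt_succ_self i))
        have := hsnd he
        rw [heq, hv0] at this
        exact this hb'
      | i + 1, j + 1 =>
        have he1 := hstep b i (hai i (Nat.lt_succ_self i))
        have he2 := hstep b' j (haj j (Nat.lt_succ_self j))
        have hpair := hmm _ he1 _ he2 (Or.inr heq)
        have hfst' : v b i = v b' j := congrArg Prod.fst hpair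
        have hlt : i + j < s := by omega
        obtain ⟨hbb, hij⟩ := ih _ hlt i j b b' rfl hb hb'
          (hActive_mono b (Nat.le_succ i) hai) (hActive_mono b' (Nat.le_succ j) haj) hfst'
        exact ⟨hbb, by omega⟩
  have key' : ∀ {i j : ℕ} {b b' : V}, b ∈ B0 → b' ∈ B0 →
      Active b i → Active b' j → v b i = v b' j → b = b' ∧ i = j :=
    fun {i j b b'} hb hb' hai haj heq => key (i + j) i j b b' rfl hb hb' hai haj heq
  -- reachability in the bipartite graph
  have hreach : ∀ b n, Active b n →
      Relation.ReflTransGen (bipStep (starM0 B0 ∪ m)) (Sum.inl b) (Sum.inl (v b n)) := by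
    intro b n
    induction n with
    | zero => intro _; exact Relation.ReflTransGen.refl
    | succ n ihn =>
      intro hact
      have h1 := ihn (hActive_mono b (Nat.le_succ n) hact)
      have he := hstep b n (hact n (Nat.lt_succ_self n))
      have hnb : v b (n + 1) ∉ B0 := hsnd he
      refine Relation.ReflTransGen.tail (Relation.ReflTransGen.tail h1
        (show bipStep (starM0 B0 ∪ m) (Sum.inl (v b n)) (Sum.inr (v b (n+1))) from Or.inr he))
        (show bipStep (starM0 B0 ∪ m) (Sum.inr (v b (n+1))) (Sum.inl (v b (n+1))) from
          Or.inl ⟨rfl, hnb⟩)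
  -- existence of a stalling index
  have hstall : ∀ b, b ∈ B0 → ∃ n, ¬ ∃ u, (v b n, u) ∈ m := by
    intro b hb
    by_contra hcon
    push_neg at hcon
    have hact : ∀ n, Active b n := fun n k _ => hcon k
    have hinj : Function.Injective (fun n => (Sum.inl (v b n) : V ⊕ V)) := by
      intro n n' h
      injection h with h
      exact (key' hb hb (hact n) (hact n') h).2
    have hsub : Set.range (fun n => (Sum.inl (v b n) : V ⊕ V)) ⊆
        {y | Relation.ReflTransGen (bipStep (starM0 B0 ∪ m)) (Sum.inl b) y} := by
      rintro _ ⟨n, rfl⟩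
      exact hreach b n (hact n)
    exact (Set.infinite_range_of_injective hinj) ((hfin (Sum.inl b)).subset hsub)
  set N : V → ℕ := fun b => if h : ∃ n, ¬ ∃ u, (v b n, u) ∈ m then Nat.find h else 0
    with hN
  have hNstall : ∀ b ∈ B0, ¬ ∃ u, (v b (N b), u) ∈ m := by
    intro b hb
    rw [hN]
    simp only [dif_pos (hstall b hb)]
    exact Nat.find_spec (hstall b hb)
  have hNact : ∀ b ∈ B0, ∀ k, k ≤ N b → Active b k := by
    intro b hb k hk j hj
    have hjN : j < N b := lt_of_lt_of_le hj hk
    rw [hN] at hjN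
    simp only [dif_pos (hstall b hb)] at hjN
    by_contra hcon
    exact LE.le.not_gt (Nat.find_min' (hstall b hb) hcon) hjN
  -- the walks
  set w : V → DiWalk V := fun b => ⟨fun i => v b (N b - i), (N b : ℕ∞)⟩ with hw
  have hwlen : ∀ b, (w b).len = (N b : ℕ∞) := fun b => rfl
  have hwvtx : ∀ b i, (w b).vtx i = v b (N b - i) := fun b i => rfl
  have hwray : ∀ b, ¬ (w b).IsRay := by
    intro b h
    exact (ENat.coe_ne_top (N b)) h
  have hwter : ∀ b, (w b).Ter = b := by
    intro b
    show (w b).vtx ((w b).len.toNat) = b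
    rw [hwvtx, hwlen]
    simp [hv0]
  have hwini : ∀ b, (w b).Ini = v b (N b) := by
    intro b
    show (w b).vtx 0 = _
    rw [hwvtx, Nat.sub_zero]
  -- support description
  have hwsupp : ∀ b x, x ∈ (w b).support → ∃ k, k ≤ N b ∧ v b k = x := by
    rintro b x ⟨i, hi, rfl⟩
    exact ⟨N b - i, Nat.sub_le _ _, rfl⟩
  have hwpath : ∀ b ∈ B0, (w b).IsPathIn D := by
    intro b hb
    constructor
    · intro i hi
      rw [hwlen] at hi
      have hi' : i + 1 ≤ N b := by exact_mod_cast (by push_cast at hi ⊢; exact hi :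
        ((i + 1 : ℕ) : ℕ∞) ≤ (N b : ℕ∞))
      set k := N b - (i + 1) with hk
      have hk1 : N b - i = k + 1 := by omega
      have he := hstep b k (hNact b hb (N b) le_rfl k (by omega))
      have hne : v b k ≠ v b (k + 1) := by
        intro hcon
        have := (key' hb hb (hNact b hb k (by omega)) (hNact b hb (k+1) (by omega)) hcon).2
        omega
      rcases hmE he with ⟨h1, -⟩ | ⟨h1, -⟩
      · exact absurd h1 hne
      · rw [hwvtx, hwvtx, hk1, ← hk]
        exact h1
    · intro i j hi hj heq
      rw [hwlen, Nat.cast_le] at hi hj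
      rw [hwvtx, hwvtx] at heq
      have := (key' hb hb (hNact b hb _ (Nat.sub_le _ _)) (hNact b hb _ (Nat.sub_le _ _)) heq).2
      omega
  -- the path system
  set Q : Set (DiWalk V) := w '' B0 with hQ
  have hdisjQ : PairwiseDisjointWalks Q := by
    rintro _ ⟨b, hb, rfl⟩ _ ⟨b', hb', rfl⟩ hne
    have hbb : b ≠ b' := fun h => hne (by rw [h])
    rw [Set.disjoint_left]
    rintro x hx hx'
    obtain ⟨k, hk, rfl⟩ := hwsupp b x hx
    obtain ⟨k', hk', heq⟩ := hwsupp b' _ hx'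
    exact hbb (key' hb hb' (hNact b hb k hk) (hNact b' hb' k' hk') heq.symm).1
  have hlink : IsLinkage D B0 Q := by
    refine ⟨⟨?_, hdisjQ⟩, ?_⟩
    · rintro _ ⟨b, hb, rfl⟩
      exact hwpath b hb
    · rintro _ ⟨b, hb, rfl⟩
      exact ⟨hwray b, by rw [hwter]; exact hb⟩
  refine ⟨IniSet Q, ⟨Q, hlink, rfl, ?_⟩, ?_⟩
  · -- TerSet Q = B0
    apply Set.Subset.antisymm
    · rintro x ⟨q, ⟨b, hb, rfl⟩, -, rfl⟩
      rw [hwter]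
      exact hb
    · intro b hb
      exact ⟨w b, ⟨b, hb, rfl⟩, hwray b, hwter b⟩
  · -- Disjoint I (IniSet Q)
    rw [Set.disjoint_left]
    rintro x hxI ⟨q, ⟨b, hb, rfl⟩, rfl⟩
    rw [hwini] at hxI
    rw [← hfst] at hxI
    obtain ⟨p, hp, hpx⟩ := hxI
    obtain ⟨p1, p2⟩ := p
    simp only at hpx
    refine hNstall b hb ⟨p2, ?_⟩
    rw [← hpx]
    exact hp

end Backward
theorem dual_of_strict_gammoid_is_pathTransversal {V : Type*} (D : V → V → Prop)
    (B0 : Set V) (hDim : IsDimaze D B0) (M : Matroid V) (hE : M.E = Set.univ)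
    (hInd : ∀ I, M.Indep I ↔ Linkable D B0 I) (hDag : DaggerProp D B0) :
    ∀ I, M.dual.Indep I ↔ M0Matchable (starEdges D B0) (starM0 B0) I := by
  intro I
  rw [Matroid.dual_indep_iff_exists']
  constructor
  · rintro ⟨-, B, hB, hdisj⟩
    have hBmax : Maximal M.Indep B := Matroid.isBase_iff_maximal_indep.mp hB
    have hBonto : LinkableOnto D B0 B := by
      apply (hDag B).mp
      refine ⟨(hInd B).mp hBmax.1, fun I' hI' hsub => ?_⟩
      exact le_antisymm hsub (hBmax.2 ((hInd I').mpr hI') hsub)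
    exact (linkableOnto_matchable hDim hBonto).subset
      (Set.subset_compl_iff_disjoint_right.mpr hdisj)
  · intro h
    obtain ⟨B, hBonto, hdisjIB⟩ := matchable_exists_linkableOnto h
    refine ⟨by rw [hE]; exact Set.subset_univ I, B, ?_, hdisjIB⟩
    rw [Matroid.isBase_iff_maximal_indep]
    obtain ⟨hlink, hmax⟩ := (hDag B).mpr hBonto
    exact ⟨(hInd B).mpr hlink, fun I' hI' hsub => (hmax I' ((hInd I').mp hI') hsub).symm.le⟩
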